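/- For every t with 0 ≤ t < 1/6, the derivative of d satisfies d′(t) = −(20·d(t)²)/(6·q(t)·c(t)) − (9·a(t)·z₂(t)·d(t))/(q(t)·c(t)) − (3·y(t)·d(t))/q(t). -/

import Mathlib

noncomputable def pFun (t : ℝ) : ℝ := 1 - 6 * t

noncomputable def rFun (s t : ℝ) : ℝ := Real.exp (-(7776 / 25) * (1 - s) ^ 2 * t ^ 3)

noncomputable def qFun (t : ℝ) : ℝ := pFun t ^ 3 / 6

noncomputable def yFun (t : ℝ) : ℝ := pFun t ^ 2

noncomputable def aFun (s t : ℝ) : ℝ := (5 / 6) * s * (1 - s) ^ 2 * pFun t ^ 5 * rFun s t ^ 2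

noncomputable def c1Fun (s t : ℝ) : ℝ := (5 / 6) * s * (1 - s) * pFun t ^ 2 * rFun s t

noncomputable def c2Fun (s t : ℝ) : ℝ := (5 / 6) * (1 - s) ^ 2 * pFun t ^ 3 * rFun s t ^ 2

noncomputable def cFun (s t : ℝ) : ℝ := c1Fun s t * c2Fun s t

noncomputable def dFun (s t : ℝ) : ℝ := (5 / 6) * s * (1 - s) ^ 3 * pFun t ^ 7 * rFun s t ^ 3

noncomputable def z0Fun (s t : ℝ) : ℝ := (5 / 6) * (1 - s) ^ 5 * pFun t ^ 9 * rFun s t ^ 3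

noncomputable def z1Fun (s t : ℝ) : ℝ := (1 - s) ^ 4 * (1 - pFun t) * pFun t ^ 6 * rFun s t ^ 2

noncomputable def z2Fun (s t : ℝ) : ℝ :=
  (6 / 5) * (1 - s) ^ 3 * (1 - pFun t) ^ 2 * pFun t ^ 3 * rFun s t

theorem d_hasDerivAt (s : ℝ) (hs0 : 0 < s) (hs1 : s < 1) (t : ℝ)
    (ht0 : 0 ≤ t) (ht : t < 1 / 6) :
    HasDerivAt (dFun s)
      (-(20 * dFun s t ^ 2) / (6 * qFun t * cFun s t)
        - (9 * aFun s t * z2Fun s t * dFun s t) / (qFun t * cFun s t)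
        - (3 * yFun t * dFun s t) / qFun t) t := by

  have hp : pFun t ≠ 0 := by unfold pFun; nlinarith
  have hr : rFun s t ≠ 0 := Real.exp_ne_zero _
  have hsne : s ≠ 0 := ne_of_gt hs0
  have hs' : (1:ℝ) - s ≠ 0 := by linarith
  have hP : HasDerivAt pFun (-6) t := by
    show HasDerivAt (fun x : ℝ => 1 - 6 * x) (-6) t
    simpa using ((hasDerivAt_id t).const_mul (6:ℝ)).const_sub 1
  have hG : HasDerivAt (fun u : ℝ => -(7776 / 25) * (1 - s) ^ 2 * u ^ 3)
      (-(7776 / 25) * (1 - s) ^ 2 * (3 * t ^ 2)) t := by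
    have := (hasDerivAt_pow 3 t).const_mul (-(7776 / 25) * (1 - s) ^ 2)
    exact this.congr_deriv (by norm_num)
  have hR : HasDerivAt (rFun s)
      (rFun s t * (-(7776 / 25) * (1 - s) ^ 2 * (3 * t ^ 2))) t := hG.exp
  have hD : HasDerivAt (dFun s)
      ((5 / 6 * s * (1 - s) ^ 3 * (7 * pFun t ^ 6 * (-6))) * rFun s t ^ 3
        + (5 / 6 * s * (1 - s) ^ 3 * pFun t ^ 7)
          * (3 * rFun s t ^ 2 * (rFun s t * (-(7776 / 25) * (1 - s) ^ 2 * (3 * t ^ 2))))) t := by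
    have h1 := ((hP.pow 7).const_mul (5 / 6 * s * (1 - s) ^ 3)).mul (hR.pow 3)
    exact h1.congr_deriv (by simp only [Pi.pow_apply]; norm_num)
  convert hD using 1
  have h6 : pFun t = 1 - 6 * t := rfl
  unfold dFun qFun cFun c1Fun c2Fun aFun z2Fun yFun
  field_simp
  rw [h6]
  ring
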